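/- Let h : ℝⁿ × ℝᵐ → [0,1] be log-concave (jointly), and let μ be a probability measure on ℝᵖ with log-concave density ψ with respect to Lebesgue measure. If f(x,u,w) = A x + B u + w (with ℝᵖ = ℝⁿ), then (x,u) ↦ ∫_{ℝⁿ} h(Ax + Bu + w) ψ(w) dw is log-concave on ℝⁿ × ℝᵐ. -/

import Mathlib

open MeasureTheory Set
open scoped ENNReal NNReal

lemma sum_subset_compact {K L S : Set ℝ} (hS : MeasurableSet S)
    (hK : IsCompact K) (hL : IsCompact L) (hKne : K.Nonempty) (hLne : L.Nonempty)
    (hsub : ∀ a ∈ K, ∀ b ∈ L, a + b ∈ S) :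
    volume K + volume L ≤ volume S := by
  set a := sSup K with ha
  set b := sInf L with hb
  have haK : a ∈ K := hK.sSup_mem hKne
  have hbL : b ∈ L := hL.sInf_mem hLne
  set X : Set ℝ := (fun x => x + (-b)) ⁻¹' K with hX
  set Y : Set ℝ := (fun x => x + (-a)) ⁻¹' L with hY
  have hXm : MeasurableSet X := hK.measurableSet.preimage (measurable_add_const _)
  have hYm : MeasurableSet Y := hL.measurableSet.preimage (measurable_add_const _)
  have hXS : X ⊆ S := by
    intro x hx
    have := hsub _ hx b hbL
    simpa using this
  have hYS : Y ⊆ S := by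
    intro x hx
    have := hsub a haK _ hx
    have h2 : a + (x + -a) = x := by ring
    rwa [h2] at this
  have hXY : X ∩ Y ⊆ {a + b} := by
    rintro x ⟨hx, hy⟩
    have h1 : x + -b ≤ a := le_csSup hK.bddAbove hx
    have h2 : b ≤ x + -a := csInf_le hL.bddBelow hy
    have : x = a + b := by linarith
    simp [this]
  have hvX : volume X = volume K := measure_preimage_add_right _ _ _
  have hvY : volume Y = volume L := measure_preimage_add_right _ _ _
  calc volume K + volume L = volume X + volume Y := by rw [hvX, hvY]
    _ = volume (X ∪ Y) + volume (X ∩ Y) := (measure_union_add_inter X hYm).symm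
    _ ≤ volume S + 0 := by
        gcongr
        · exact union_subset hXS hYS
        · exact le_trans (measure_mono hXY) (by simp)
    _ = volume S := by simp

lemma sum_subset_meas {A B S : Set ℝ} (hA : MeasurableSet A) (hB : MeasurableSet B)
    (hS : MeasurableSet S) (hAne : A.Nonempty) (hBne : B.Nonempty)
    (hsub : ∀ a ∈ A, ∀ b ∈ B, a + b ∈ S) :
    volume A + volume B ≤ volume S := by
  obtain ⟨a₀, ha₀⟩ := hAne
  obtain ⟨b₀, hb₀⟩ := hBne
  have htrA : volume A ≤ volume S := by
    have hsub' : A ⊆ (fun x => x + b₀) ⁻¹' S := fun a ha => hsub a ha b₀ hb₀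
    calc volume A ≤ volume ((fun x => x + b₀) ⁻¹' S) := measure_mono hsub'
      _ = volume S := measure_preimage_add_right _ _ _
  have htrB : volume B ≤ volume S := by
    have hsub' : B ⊆ (fun x => a₀ + x) ⁻¹' S := fun bb hbb => hsub a₀ ha₀ bb hbb
    calc volume B ≤ volume ((fun x => a₀ + x) ⁻¹' S) := measure_mono hsub'
      _ = volume S := measure_preimage_add _ _ _
  by_cases hAf : volume A = ∞
  · simp [top_le_iff.mp (hAf ▸ htrA)]
  by_cases hBf : volume B = ∞
  · simp [top_le_iff.mp (hBf ▸ htrB)]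
  refine ENNReal.le_of_forall_pos_le_add (fun ε hε hSf => ?_)
  have hε2 : ((ε : ℝ≥0∞) / 2) ≠ 0 := by
    simp [ENNReal.div_eq_zero_iff, hε.ne']
  obtain ⟨K, hKA, hKc, hKv⟩ := hA.exists_isCompact_lt_add hAf hε2
  obtain ⟨L, hLB, hLc, hLv⟩ := hB.exists_isCompact_lt_add hBf hε2
  have hKc' : IsCompact (K ∪ {a₀}) := hKc.union isCompact_singleton
  have hLc' : IsCompact (L ∪ {b₀}) := hLc.union isCompact_singleton
  have hKA' : K ∪ {a₀} ⊆ A := union_subset hKA (by simpa using ha₀)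
  have hLB' : L ∪ {b₀} ⊆ B := union_subset hLB (by simpa using hb₀)
  have key := sum_subset_compact hS hKc' hLc' ⟨a₀, by simp⟩ ⟨b₀, by simp⟩
    (fun a ha bb hbb => hsub a (hKA' ha) bb (hLB' hbb))
  have h1 : volume A ≤ volume (K ∪ {a₀}) + ε / 2 :=
    le_trans hKv.le (add_le_add_left (measure_mono subset_union_left) _)
  have h2 : volume B ≤ volume (L ∪ {b₀}) + ε / 2 :=
    le_trans hLv.le (add_le_add_left (measure_mono subset_union_left) _)
  calc volume A + volume B ≤ (volume (K ∪ {a₀}) + ε/2) + (volume (L ∪ {b₀}) + ε/2) := by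
        exact add_le_add h1 h2
    _ = (volume (K ∪ {a₀}) + volume (L ∪ {b₀})) + (ε/2 + ε/2) := by ring
    _ ≤ volume S + ε :=
        add_le_add key (le_of_eq (ENNReal.add_halves _))

lemma ennreal_am_gm (x y : ℝ≥0∞) {l : ℝ} (hl : 0 < l) (hl1 : l < 1) :
    x ^ l * y ^ (1 - l) ≤ ENNReal.ofReal l * x + ENNReal.ofReal (1 - l) * y := by
  have hl' : (0:ℝ) < 1 - l := by linarith
  by_cases hx : x = ∞
  · subst hx
    have : ENNReal.ofReal l * ∞ = ∞ := by
      rw [ENNReal.mul_top]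
      simp [ENNReal.ofReal_eq_zero, not_le, hl]
    rw [this]
    simp
  by_cases hy : y = ∞
  · subst hy
    have : ENNReal.ofReal (1 - l) * ∞ = ∞ := by
      rw [ENNReal.mul_top]
      simp [ENNReal.ofReal_eq_zero, not_le, hl', hl1]
    rw [this]
    simp
  lift x to ℝ≥0 using hx
  lift y to ℝ≥0 using hy
  rw [← ENNReal.coe_rpow_of_nonneg x hl.le, ← ENNReal.coe_rpow_of_nonneg y hl'.le,
    ← ENNReal.coe_mul]
  rw [ENNReal.ofReal, ENNReal.ofReal, ← ENNReal.coe_mul, ← ENNReal.coe_mul, ← ENNReal.coe_add,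
    ENNReal.coe_le_coe]
  have := NNReal.geom_mean_le_arith_mean2_weighted (w₁ := l.toNNReal)
    (w₂ := (1-l).toNNReal) (p₁ := x) (p₂ := y) ?_
  · convert this using 3 <;> simp [Real.coe_toNNReal _ hl.le, Real.coe_toNNReal _ hl'.le]
  · ext
    simp [Real.coe_toNNReal _ hl.le, Real.coe_toNNReal _ hl'.le]

lemma ennreal_rpow_iSup (u : ℕ → ℝ≥0∞) {p : ℝ} (hp : 0 < p) :
    (⨆ n, u n) ^ p = ⨆ n, (u n) ^ p := by
  apply le_antisymm
  · have h1 : (⨆ n, u n) ≤ (⨆ n, (u n) ^ p) ^ (1 / p) := by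
      apply iSup_le
      intro n
      have : u n = ((u n) ^ p) ^ (1/p) := by
        rw [← ENNReal.rpow_mul]
        field_simp
        rw [ENNReal.rpow_one]
      rw [this]
      exact ENNReal.rpow_le_rpow (le_iSup (fun n => (u n)^p) n) (by positivity)
    calc (⨆ n, u n) ^ p ≤ ((⨆ n, (u n) ^ p) ^ (1/p)) ^ p := ENNReal.rpow_le_rpow h1 hp.le
      _ = ⨆ n, (u n) ^ p := by rw [← ENNReal.rpow_mul]; field_simp; rw [ENNReal.rpow_one]
  · exact iSup_le fun n => ENNReal.rpow_le_rpow (le_iSup u n) hp.le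

lemma ennreal_isup_min_nat (a : ℝ≥0∞) : ⨆ n : ℕ, min a n = a := by
  rw [← inf_iSup_eq (f := fun n : ℕ => (n : ℝ≥0∞)) (a := a)]
  simp [ENNReal.iSup_natCast]

lemma layercake_div {φ : ℝ → ℝ≥0∞} (hφ : Measurable φ) {M : ℝ≥0∞} (hM0 : M ≠ 0)
    (hMt : M ≠ ∞) (hφt : ∀ x, φ x ≠ ∞) :
    ∫⁻ t in Ioi (0:ℝ), volume {x | ENNReal.ofReal t * M < φ x} = (∫⁻ x, φ x) / M := by
  have hmeas : Measurable fun x => (φ x / M).toReal :=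
    (hφ.div_const M).ennreal_toReal
  have h1 := lintegral_eq_lintegral_meas_lt volume
    (f := fun x => (φ x / M).toReal) (ae_of_all _ fun x => ENNReal.toReal_nonneg)
    hmeas.aemeasurable
  have hfin : ∀ x, φ x / M ≠ ∞ := fun x =>
    (ENNReal.div_lt_top (hφt x) hM0).ne
  have hLHS : ∫⁻ x, ENNReal.ofReal ((φ x / M).toReal) = (∫⁻ x, φ x) / M := by
    have : ∀ x, ENNReal.ofReal ((φ x / M).toReal) = φ x * M⁻¹ := fun x => by
      rw [ENNReal.ofReal_toReal (hfin x), ENNReal.div_eq_inv_mul, mul_comm]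
    simp_rw [this]
    rw [lintegral_mul_const' _ _ (by simpa using hM0), ENNReal.div_eq_inv_mul, mul_comm]
  have hRHS : ∫⁻ t in Ioi (0:ℝ), volume {x | t < (φ x / M).toReal}
      = ∫⁻ t in Ioi (0:ℝ), volume {x | ENNReal.ofReal t * M < φ x} := by
    apply setLIntegral_congr_fun measurableSet_Ioi
    intro t ht
    dsimp only
    congr 1
    ext x
    simp only [mem_setOf_eq]
    rw [← ENNReal.ofReal_lt_iff_lt_toReal (le_of_lt ht) (hfin x),
      ENNReal.lt_div_iff_mul_lt (Or.inl hM0) (Or.inl hMt)]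
  rw [← hRHS, ← h1, hLHS]

lemma dim1_bounded (f g h : ℝ → ℝ≥0∞) (hf : Measurable f) (hg : Measurable g)
    (hh : Measurable h) {l : ℝ} (hl : 0 < l) (hl1 : l < 1)
    {N K L : ℝ≥0∞} (hN : N ≠ ∞) (hK : K ≠ ∞) (hL : L ≠ ∞)
    (hfN : ∀ x, f x ≤ N) (hgK : ∀ x, g x ≤ K) (hhL : ∀ x, h x ≤ L)
    (hyp : ∀ x y : ℝ, f x ^ l * g y ^ (1 - l) ≤ h (l * x + (1 - l) * y)) :
    (∫⁻ x, f x) ^ l * (∫⁻ x, g x) ^ (1 - l) ≤ ∫⁻ x, h x := by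
  have hl' : (0:ℝ) < 1 - l := by linarith
  set Mf := ⨆ x, f x with hMf
  set Mg := ⨆ x, g x with hMg
  have hMfN : Mf ≠ ∞ := ((iSup_le hfN).trans_lt hN.lt_top).ne
  have hMgK : Mg ≠ ∞ := ((iSup_le hgK).trans_lt hK.lt_top).ne
  have hfMf : ∀ x, f x ≤ Mf := fun x => le_iSup f x
  have hgMg : ∀ x, g x ≤ Mg := fun x => le_iSup g x
  by_cases hMf0 : Mf = 0
  · have : ∀ x, f x = 0 := fun x => le_antisymm (hMf0 ▸ hfMf x) (zero_le)
    simp [this, ENNReal.zero_rpow_of_pos hl]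
  by_cases hMg0 : Mg = 0
  · have : ∀ x, g x = 0 := fun x => le_antisymm (hMg0 ▸ hgMg x) (zero_le)
    simp [this, ENNReal.zero_rpow_of_pos hl']
  set C := Mf ^ l * Mg ^ (1 - l) with hC
  have hC0 : C ≠ 0 := by
    apply mul_ne_zero
    · exact (ENNReal.rpow_pos (bot_lt_iff_ne_bot.mpr hMf0) hMfN).ne'
    · exact (ENNReal.rpow_pos (bot_lt_iff_ne_bot.mpr hMg0) hMgK).ne'
  have hCt : C ≠ ∞ := ENNReal.mul_ne_top
    (ENNReal.rpow_ne_top_of_nonneg hl.le hMfN)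
    (ENNReal.rpow_ne_top_of_nonneg hl'.le hMgK)
  -- the key pointwise (in t) inequality
  have key : ∀ t : ℝ, t ∈ Ioi (0:ℝ) →
      ENNReal.ofReal l * volume {x | ENNReal.ofReal t * Mf < f x}
        + ENNReal.ofReal (1 - l) * volume {x | ENNReal.ofReal t * Mg < g x}
      ≤ volume {x | ENNReal.ofReal t * C < h x} := by
    intro t ht
    rw [mem_Ioi] at ht
    set τ := ENNReal.ofReal t with hτ
    have hτ0 : τ ≠ 0 := by simp [hτ, ht.le, ht]
    have hτt : τ ≠ ∞ := ENNReal.ofReal_ne_top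
    rcases lt_or_ge t 1 with ht1 | ht1
    · -- t < 1 : both level sets nonempty, use the sumset estimate
      set A₀ := {x | τ * Mf < f x} with hA₀
      set B₀ := {x | τ * Mg < g x} with hB₀
      set S := {x | τ * C < h x} with hS
      have hA₀m : MeasurableSet A₀ := measurableSet_lt measurable_const hf
      have hB₀m : MeasurableSet B₀ := measurableSet_lt measurable_const hg
      have hSm : MeasurableSet S := measurableSet_lt measurable_const hh
      have hτ1 : τ < 1 := by
        rw [hτ]; exact ENNReal.ofReal_lt_one.mpr ht1
      have hA₀ne : A₀.Nonempty := by
        have : τ * Mf < Mf := by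
          calc τ * Mf < 1 * Mf :=
            ENNReal.mul_lt_mul_left hMf0 hMfN hτ1
          _ = Mf := one_mul _
        obtain ⟨x, hx⟩ := lt_iSup_iff.mp this
        exact ⟨x, hx⟩
      have hB₀ne : B₀.Nonempty := by
        have : τ * Mg < Mg := by
          calc τ * Mg < 1 * Mg :=
            ENNReal.mul_lt_mul_left hMg0 hMgK hτ1
          _ = Mg := one_mul _
        obtain ⟨x, hx⟩ := lt_iSup_iff.mp this
        exact ⟨x, hx⟩
      set A : Set ℝ := (fun x => l⁻¹ * x) ⁻¹' A₀ with hA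
      set B : Set ℝ := (fun x => (1 - l)⁻¹ * x) ⁻¹' B₀ with hB
      have hAm : MeasurableSet A := hA₀m.preimage (measurable_const_mul _)
      have hBm : MeasurableSet B := hB₀m.preimage (measurable_const_mul _)
      have hAne : A.Nonempty := by
        obtain ⟨x, hx⟩ := hA₀ne
        refine ⟨l * x, ?_⟩
        have hc : l⁻¹ * (l * x) = x := inv_mul_cancel_left₀ hl.ne' x
        simp only [hA, mem_preimage, hc]
        exact hx
      have hBne : B.Nonempty := by
        obtain ⟨x, hx⟩ := hB₀ne
        refine ⟨(1 - l) * x, ?_⟩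
        have hc : (1 - l)⁻¹ * ((1 - l) * x) = x := inv_mul_cancel_left₀ hl'.ne' x
        simp only [hB, mem_preimage, hc]
        exact hx
      have hsub : ∀ a ∈ A, ∀ b ∈ B, a + b ∈ S := by
        intro a ha b hb
        rw [hA, mem_preimage] at ha
        rw [hB, mem_preimage] at hb
        have hab : a + b = l * (l⁻¹ * a) + (1 - l) * ((1 - l)⁻¹ * b) := by
          field_simp
        rw [hS, mem_setOf_eq, hab]
        calc τ * C = (τ ^ l * τ ^ (1 - l)) * (Mf ^ l * Mg ^ (1 - l)) := by
              rw [← ENNReal.rpow_add _ _ hτ0 hτt]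
              norm_num
              rfl
          _ = (τ * Mf) ^ l * ((τ * Mg) ^ (1 - l)) := by
              rw [ENNReal.mul_rpow_of_nonneg _ _ hl.le,
                ENNReal.mul_rpow_of_nonneg _ _ hl'.le]
              ring
          _ < f (l⁻¹ * a) ^ l * g ((1 - l)⁻¹ * b) ^ (1 - l) :=
              ENNReal.mul_lt_mul (ENNReal.rpow_lt_rpow ha hl)
                (ENNReal.rpow_lt_rpow hb hl')
          _ ≤ h (l * (l⁻¹ * a) + (1 - l) * ((1 - l)⁻¹ * b)) := hyp _ _
      have hvol := sum_subset_meas hAm hBm hSm hAne hBne hsub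
      have hvA : volume A = ENNReal.ofReal l * volume A₀ := by
        rw [hA, Real.volume_preimage_mul_left (inv_ne_zero hl.ne')]
        congr 2
        rw [inv_inv, abs_of_pos hl]
      have hvB : volume B = ENNReal.ofReal (1 - l) * volume B₀ := by
        rw [hB, Real.volume_preimage_mul_left (inv_ne_zero hl'.ne')]
        congr 2
        rw [inv_inv, abs_of_pos hl']
      rw [← hvA, ← hvB]
      exact hvol
    · -- 1 ≤ t : both level sets are empty
      have hA₀e : {x | τ * Mf < f x} = ∅ := by
        ext x
        simp only [mem_setOf_eq, mem_empty_iff_false, iff_false, not_lt]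
        calc f x ≤ Mf := hfMf x
          _ = 1 * Mf := (one_mul _).symm
          _ ≤ τ * Mf := mul_le_mul_left (by simpa [hτ] using ENNReal.one_le_ofReal.mpr ht1) _
      have hB₀e : {x | τ * Mg < g x} = ∅ := by
        ext x
        simp only [mem_setOf_eq, mem_empty_iff_false, iff_false, not_lt]
        calc g x ≤ Mg := hgMg x
          _ = 1 * Mg := (one_mul _).symm
          _ ≤ τ * Mg := mul_le_mul_left (by simpa [hτ] using ENNReal.one_le_ofReal.mpr ht1) _
      rw [hA₀e, hB₀e]
      simp
  -- now integrate over t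
  have hfinf : ∀ x, f x ≠ ∞ := fun x => ((hfN x).trans_lt hN.lt_top).ne
  have hfing : ∀ x, g x ≠ ∞ := fun x => ((hgK x).trans_lt hK.lt_top).ne
  have hfinh : ∀ x, h x ≠ ∞ := fun x => ((hhL x).trans_lt hL.lt_top).ne
  have hmero : Measurable fun t : ℝ => volume {x | ENNReal.ofReal t * Mf < f x} := by
    apply Antitone.measurable
    intro s t hst
    apply measure_mono
    intro x hx
    exact lt_of_le_of_lt (mul_le_mul_left (ENNReal.ofReal_le_ofReal hst) _) hx
  have step1 : ENNReal.ofReal l * ((∫⁻ x, f x) / Mf)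
      + ENNReal.ofReal (1 - l) * ((∫⁻ x, g x) / Mg) ≤ (∫⁻ x, h x) / C := by
    rw [← layercake_div hf hMf0 hMfN hfinf, ← layercake_div hg hMg0 hMgK hfing,
      ← layercake_div hh hC0 hCt hfinh]
    rw [← lintegral_const_mul' _ _ ENNReal.ofReal_ne_top,
      ← lintegral_const_mul' _ _ ENNReal.ofReal_ne_top,
      ← lintegral_add_left (hmero.const_mul _)]
    exact lintegral_mono_ae (((ae_restrict_mem measurableSet_Ioi).mono) fun t ht => key t ht)
  calc (∫⁻ x, f x) ^ l * (∫⁻ x, g x) ^ (1 - l)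
      = (Mf * ((∫⁻ x, f x) / Mf)) ^ l * (Mg * ((∫⁻ x, g x) / Mg)) ^ (1 - l) := by
        rw [ENNReal.mul_div_cancel hMf0 hMfN, ENNReal.mul_div_cancel hMg0 hMgK]
    _ = C * (((∫⁻ x, f x) / Mf) ^ l * ((∫⁻ x, g x) / Mg) ^ (1 - l)) := by
        rw [ENNReal.mul_rpow_of_nonneg _ _ hl.le, ENNReal.mul_rpow_of_nonneg _ _ hl'.le, hC]
        ring
    _ ≤ C * (ENNReal.ofReal l * ((∫⁻ x, f x) / Mf)
          + ENNReal.ofReal (1 - l) * ((∫⁻ x, g x) / Mg)) :=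
        mul_le_mul_right (ennreal_am_gm _ _ hl hl1) _
    _ ≤ C * ((∫⁻ x, h x) / C) := mul_le_mul_right step1 _
    _ ≤ ∫⁻ x, h x := ENNReal.mul_div_le

lemma dim1 (f g h : ℝ → ℝ≥0∞) (hf : Measurable f) (hg : Measurable g)
    (hh : Measurable h) {l : ℝ} (hl : 0 < l) (hl1 : l < 1)
    (hyp : ∀ x y : ℝ, f x ^ l * g y ^ (1 - l) ≤ h (l * x + (1 - l) * y)) :
    (∫⁻ x, f x) ^ l * (∫⁻ x, g x) ^ (1 - l) ≤ ∫⁻ x, h x := by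
  have hl' : (0:ℝ) < 1 - l := by linarith
  have main : ∀ N K : ℕ, (∫⁻ x, min (f x) N) ^ l * (∫⁻ x, min (g x) K) ^ (1 - l)
      ≤ ∫⁻ x, h x := by
    intro N K
    have hb := dim1_bounded (fun x => min (f x) N) (fun x => min (g x) K)
      (fun x => min (h x) ((N : ℝ≥0∞) ^ l * (K : ℝ≥0∞) ^ (1 - l)))
      (hf.min measurable_const) (hg.min measurable_const) (hh.min measurable_const)
      hl hl1 (N := (N : ℝ≥0∞)) (K := (K : ℝ≥0∞))
      (L := (N : ℝ≥0∞) ^ l * (K : ℝ≥0∞) ^ (1 - l))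
      (ENNReal.natCast_ne_top N) (ENNReal.natCast_ne_top K)
      (ENNReal.mul_ne_top (ENNReal.rpow_ne_top_of_nonneg hl.le (ENNReal.natCast_ne_top N))
        (ENNReal.rpow_ne_top_of_nonneg hl'.le (ENNReal.natCast_ne_top K)))
      (fun x => min_le_right _ _) (fun x => min_le_right _ _) (fun x => min_le_right _ _)
      ?_
    · calc (∫⁻ x, min (f x) N) ^ l * (∫⁻ x, min (g x) K) ^ (1 - l)
        ≤ ∫⁻ x, min (h x) ((N : ℝ≥0∞) ^ l * (K : ℝ≥0∞) ^ (1 - l)) := hb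
        _ ≤ ∫⁻ x, h x := lintegral_mono fun x => min_le_left _ _
    · intro x y
      apply le_min
      · exact le_trans (mul_le_mul' (ENNReal.rpow_le_rpow (min_le_left _ _) hl.le)
          (ENNReal.rpow_le_rpow (min_le_left _ _) hl'.le)) (hyp x y)
      · exact mul_le_mul' (ENNReal.rpow_le_rpow (min_le_right _ _) hl.le)
          (ENNReal.rpow_le_rpow (min_le_right _ _) hl'.le)
  have hFs : (∫⁻ x, f x) = ⨆ N : ℕ, ∫⁻ x, min (f x) N := by
    rw [← lintegral_iSup (fun N => hf.min measurable_const)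
      (fun i j hij x => min_le_min le_rfl (Nat.cast_le.mpr hij))]
    simp_rw [ennreal_isup_min_nat]
  have hGs : (∫⁻ x, g x) = ⨆ K : ℕ, ∫⁻ x, min (g x) K := by
    rw [← lintegral_iSup (fun K => hg.min measurable_const)
      (fun i j hij x => min_le_min le_rfl (Nat.cast_le.mpr hij))]
    simp_rw [ennreal_isup_min_nat]
  rw [hFs, hGs, ennreal_rpow_iSup _ hl, ennreal_rpow_iSup _ hl', ENNReal.iSup_mul]
  apply iSup_le
  intro N
  rw [ENNReal.mul_iSup]
  exact iSup_le fun K => main N K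

lemma PL_pi : ∀ (n : ℕ) (f g h : (Fin n → ℝ) → ℝ≥0∞), Measurable f → Measurable g →
    Measurable h → ∀ {l : ℝ}, 0 < l → l < 1 →
    (∀ x y, f x ^ l * g y ^ (1 - l) ≤ h (l • x + (1 - l) • y)) →
    (∫⁻ x, f x) ^ l * (∫⁻ x, g x) ^ (1 - l) ≤ ∫⁻ x, h x := by
  intro n
  induction n with
  | zero =>
    intro f g h hf hg hh l hl hl1 hyp
    have hvol : volume (univ : Set (Fin 0 → ℝ)) = 1 := by
      rw [volume_pi, Measure.pi_univ]
      simp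
    have hconst : ∀ φ : (Fin 0 → ℝ) → ℝ≥0∞, ∫⁻ x, φ x = φ 0 := by
      intro φ
      have : φ = fun _ => φ 0 := funext fun x => congrArg φ (Subsingleton.elim x 0)
      rw [this, lintegral_const, hvol, mul_one]
    rw [hconst f, hconst g, hconst h]
    have := hyp 0 0
    rwa [Subsingleton.elim (l • (0 : Fin 0 → ℝ) + (1 - l) • (0 : Fin 0 → ℝ)) 0] at this
  | succ n ih =>
    intro f g h hf hg hh l hl hl1 hyp
    have hl' : (0:ℝ) < 1 - l := by linarith
    set e := MeasurableEquiv.piFinSuccAbove (fun _ : Fin (n+1) => ℝ) 0 with he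
    have hmp : MeasurePreserving e (volume : Measure (Fin (n+1) → ℝ))
        ((volume : Measure ℝ).prod (volume : Measure (Fin n → ℝ))) := by
      have h0 := measurePreserving_piFinSuccAbove (fun _ : Fin (n+1) => (volume : Measure ℝ)) 0
      rw [volume_pi, volume_pi]
      exact h0
    have he_lin : ∀ (a b : ℝ) (x y : Fin (n+1) → ℝ), e (a • x + b • y) = a • e x + b • e y := by
      intro a b x y
      rfl
    have hsymm_lin : ∀ (a b : ℝ) (p q : ℝ × (Fin n → ℝ)),
        e.symm (a • p + b • q) = a • e.symm p + b • e.symm q := by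
      intro a b p q
      apply e.injective
      rw [e.apply_symm_apply, he_lin, e.apply_symm_apply, e.apply_symm_apply]
    set f' := fun p : ℝ × (Fin n → ℝ) => f (e.symm p) with hf'def
    set g' := fun p : ℝ × (Fin n → ℝ) => g (e.symm p) with hg'def
    set h' := fun p : ℝ × (Fin n → ℝ) => h (e.symm p) with hh'def
    have hf' : Measurable f' := hf.comp e.symm.measurable
    have hg' : Measurable g' := hg.comp e.symm.measurable
    have hh' : Measurable h' := hh.comp e.symm.measurable
    set F := fun a : ℝ => ∫⁻ v, f' (a, v) with hFdef
    set G := fun a : ℝ => ∫⁻ v, g' (a, v) with hGdef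
    set H := fun a : ℝ => ∫⁻ v, h' (a, v) with hHdef
    have hF : Measurable F := Measurable.lintegral_prod_right hf'
    have hG : Measurable G := Measurable.lintegral_prod_right hg'
    have hH : Measurable H := Measurable.lintegral_prod_right hh'
    have hFGH : ∀ a b : ℝ, F a ^ l * G b ^ (1 - l) ≤ H (l * a + (1 - l) * b) := by
      intro a b
      refine ih (fun v => f' (a, v)) (fun v => g' (b, v))
        (fun v => h' (l * a + (1 - l) * b, v))
        (hf'.comp measurable_prodMk_left) (hg'.comp measurable_prodMk_left)
        (hh'.comp measurable_prodMk_left) hl hl1 ?_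
      intro x y
      have hpt : ((l * a + (1 - l) * b, l • x + (1 - l) • y) : ℝ × (Fin n → ℝ))
          = l • (a, x) + (1 - l) • (b, y) := by
        simp [Prod.ext_iff, smul_eq_mul]
      show f (e.symm (a, x)) ^ l * g (e.symm (b, y)) ^ (1 - l)
          ≤ h (e.symm (l * a + (1 - l) * b, l • x + (1 - l) • y))
      rw [hpt, hsymm_lin]
      exact hyp _ _
    have key := dim1 F G H hF hG hH hl hl1 hFGH
    have conv : ∀ (φ : (Fin (n+1) → ℝ) → ℝ≥0∞), Measurable φ →
        (∫⁻ a, ∫⁻ v, φ (e.symm (a, v))) = ∫⁻ x, φ x := by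
      intro φ hφ
      have hφ' : Measurable fun p : ℝ × (Fin n → ℝ) => φ (e.symm p) :=
        hφ.comp e.symm.measurable
      rw [← lintegral_prod _ hφ'.aemeasurable]
      have h2 := hmp.lintegral_comp hφ'
      rw [← h2]
      apply lintegral_congr
      intro x
      simp
    rwa [hFdef, hGdef, hHdef, hf'def, hg'def, hh'def, conv f hf, conv g hg, conv h hh] at key

theorem integral_logconcave (n m : ℕ)
    (h : (Fin n → ℝ) → ℝ)
    (hh01 : ∀ y, h y ∈ Set.Icc (0 : ℝ) 1)
    (hhmeas : Measurable h)
    (hhlc : ∀ y₁ y₂ : Fin n → ℝ, ∀ l : ℝ, 0 ≤ l → l ≤ 1 →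
      h (l • y₁ + (1 - l) • y₂) ≥ h y₁ ^ l * h y₂ ^ (1 - l))
    (ψ : (Fin n → ℝ) → ℝ)
    (hψ0 : ∀ w, 0 ≤ ψ w) (hψmeas : Measurable ψ)
    (hψint : ∫ w, ψ w = 1)
    (hψlc : ∀ w₁ w₂ : Fin n → ℝ, ∀ l : ℝ, 0 ≤ l → l ≤ 1 →
      ψ (l • w₁ + (1 - l) • w₂) ≥ ψ w₁ ^ l * ψ w₂ ^ (1 - l))
    (A : (Fin n → ℝ) →ₗ[ℝ] (Fin n → ℝ)) (B : (Fin m → ℝ) →ₗ[ℝ] (Fin n → ℝ)) :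
    ∀ z₁ z₂ : (Fin n → ℝ) × (Fin m → ℝ), ∀ l : ℝ, 0 ≤ l → l ≤ 1 →
      (∫ w, h (A (l • z₁ + (1 - l) • z₂).1 + B (l • z₁ + (1 - l) • z₂).2 + w) * ψ w) ≥
        (∫ w, h (A z₁.1 + B z₁.2 + w) * ψ w) ^ l *
          (∫ w, h (A z₂.1 + B z₂.2 + w) * ψ w) ^ (1 - l) := by
  intro z₁ z₂ l hl0 hl1
  rcases eq_or_lt_of_le hl0 with rfl | hl0'
  · simp
  rcases eq_or_lt_of_le hl1 with rfl | hl1'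
  · simp
  have hl' : (0:ℝ) < 1 - l := by linarith
  set c₁ := A z₁.1 + B z₁.2 with hc₁
  set c₂ := A z₂.1 + B z₂.2 with hc₂
  set c := A (l • z₁ + (1 - l) • z₂).1 + B (l • z₁ + (1 - l) • z₂).2 with hcdef
  have hc : c = l • c₁ + (1 - l) • c₂ := by
    rw [hcdef, hc₁, hc₂]
    have h1 : (l • z₁ + (1 - l) • z₂).1 = l • z₁.1 + (1 - l) • z₂.1 := rfl
    have h2 : (l • z₁ + (1 - l) • z₂).2 = l • z₁.2 + (1 - l) • z₂.2 := rfl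
    rw [h1, h2, map_add, map_add, _root_.map_smul, _root_.map_smul, _root_.map_smul, _root_.map_smul]
    module
  -- measurability of translates
  have hmt : ∀ c' : Fin n → ℝ, Measurable fun w : Fin n → ℝ => h (c' + w) * ψ w :=
    fun c' => (hhmeas.comp (measurable_const_add c')).mul hψmeas
  have hnn : ∀ (c' : Fin n → ℝ) (w : Fin n → ℝ), 0 ≤ h (c' + w) * ψ w :=
    fun c' w => mul_nonneg (hh01 _).1 (hψ0 w)
  -- ψ is integrable
  have hψi : Integrable ψ := by
    by_contra hni
    rw [integral_undef hni] at hψint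
    norm_num at hψint
  have hψlint : ∫⁻ w, ENNReal.ofReal (ψ w) = 1 := by
    rw [← ofReal_integral_eq_lintegral_ofReal hψi (ae_of_all _ hψ0), hψint]
    simp
  set L₁ := ∫⁻ w, ENNReal.ofReal (h (c₁ + w) * ψ w) with hL₁
  set L₂ := ∫⁻ w, ENNReal.ofReal (h (c₂ + w) * ψ w) with hL₂
  set L₃ := ∫⁻ w, ENNReal.ofReal (h (c + w) * ψ w) with hL₃
  have hbound : ∀ c' : Fin n → ℝ, (∫⁻ w, ENNReal.ofReal (h (c' + w) * ψ w)) ≤ 1 := by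
    intro c'
    rw [← hψlint]
    exact lintegral_mono fun w =>
      ENNReal.ofReal_le_ofReal (mul_le_of_le_one_left (hψ0 w) (hh01 _).2)
  have hL₁t : L₁ ≠ ∞ := ((hbound c₁).trans_lt (by norm_num)).ne
  have hL₂t : L₂ ≠ ∞ := ((hbound c₂).trans_lt (by norm_num)).ne
  have hL₃t : L₃ ≠ ∞ := ((hbound c).trans_lt (by norm_num)).ne
  -- the PL inequality
  have key : L₁ ^ l * L₂ ^ (1 - l) ≤ L₃ := by
    rw [hL₁, hL₂, hL₃]
    apply PL_pi n (fun w => ENNReal.ofReal (h (c₁ + w) * ψ w))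
      (fun w => ENNReal.ofReal (h (c₂ + w) * ψ w))
      (fun w => ENNReal.ofReal (h (c + w) * ψ w))
      (hmt c₁).ennreal_ofReal (hmt c₂).ennreal_ofReal (hmt c).ennreal_ofReal hl0' hl1'
    intro w₁ w₂
    rw [ENNReal.ofReal_rpow_of_nonneg (hnn c₁ w₁) hl0'.le,
      ENNReal.ofReal_rpow_of_nonneg (hnn c₂ w₂) hl'.le,
      ← ENNReal.ofReal_mul (Real.rpow_nonneg (hnn c₁ w₁) l)]
    apply ENNReal.ofReal_le_ofReal
    have e₁ : (h (c₁ + w₁) * ψ w₁) ^ l = h (c₁ + w₁) ^ l * ψ w₁ ^ l :=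
      Real.mul_rpow (hh01 _).1 (hψ0 _)
    have e₂ : (h (c₂ + w₂) * ψ w₂) ^ (1 - l) = h (c₂ + w₂) ^ (1 - l) * ψ w₂ ^ (1 - l) :=
      Real.mul_rpow (hh01 _).1 (hψ0 _)
    rw [e₁, e₂]
    have hpt : l • (c₁ + w₁) + (1 - l) • (c₂ + w₂) = c + (l • w₁ + (1 - l) • w₂) := by
      rw [hc]; module
    have hh' := hhlc (c₁ + w₁) (c₂ + w₂) l hl0 hl1
    rw [hpt] at hh'
    have hψ' := hψlc w₁ w₂ l hl0 hl1
    calc h (c₁ + w₁) ^ l * ψ w₁ ^ l * (h (c₂ + w₂) ^ (1 - l) * ψ w₂ ^ (1 - l))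
        = (h (c₁ + w₁) ^ l * h (c₂ + w₂) ^ (1 - l)) * (ψ w₁ ^ l * ψ w₂ ^ (1 - l)) := by ring
      _ ≤ h (c + (l • w₁ + (1 - l) • w₂)) * ψ (l • w₁ + (1 - l) • w₂) := by
          apply mul_le_mul hh' hψ'
            (mul_nonneg (Real.rpow_nonneg (hψ0 _) _) (Real.rpow_nonneg (hψ0 _) _))
            (hh01 _).1
  -- convert to Bochner integrals
  have hbo : ∀ c' : Fin n → ℝ,
      ∫ w, h (c' + w) * ψ w = (∫⁻ w, ENNReal.ofReal (h (c' + w) * ψ w)).toReal := by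
    intro c'
    rw [integral_eq_lintegral_of_nonneg_ae (ae_of_all _ fun w => hnn c' w)
      (hmt c').aestronglyMeasurable]
  rw [ge_iff_le, hbo c₁, hbo c₂, hbo c, ENNReal.toReal_rpow, ENNReal.toReal_rpow,
    ← ENNReal.toReal_mul]
  exact ENNReal.toReal_mono hL₃t key
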